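/- Let G = (V,E) be a finite graph that is 3-colorable with colors {R,G,B}. Over the item set 𝓘 = {R_v, G_v, B_v : v ∈ V}, there exists a transaction database 𝓓 of size n (a multiset of n subsets of 𝓘, n ≥ 3) such that: for each vertex v, |support({R_v},𝓓) − n/3| ≤ 1, |support({G_v},𝓓) − n/3| ≤ 1, |support({B_v},𝓓) − n/3| ≤ 1, support({R_v,G_v},𝓓) = support({R_v,B_v},𝓓) = support({G_v,B_v},𝓓) = 0, and for each edge (u,v) ∈ E, support({R_u,R_v},𝓓) = support({G_u,G_v},𝓓) = support({B_u,B_v},𝓓) = 0. -/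

import Mathlib

/-- The support of an itemset `I` in a transaction database `D` (a multiset of
subsets of the item set): the number of transactions containing `I`. -/
def support {ι : Type*} [DecidableEq ι] (I : Finset ι) (D : Multiset (Finset ι)) : ℕ :=
  (D.filter (fun T => I ⊆ T)).card

lemma card_filter_replicate {α : Type*} (p : α → Prop) [DecidablePred p]
    (m : ℕ) (a : α) :
    Multiset.card (Multiset.filter p (Multiset.replicate m a)) =
      if p a then m else 0 := by
  induction m with
  | zero => simp
  | succ m ih =>
      rw [Multiset.replicate_succ, Multiset.filter_cons]
      split_ifs at ih ⊢ <;> simp_all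

theorem three_colorable_gives_approx_database
    {V : Type*} [Fintype V] [DecidableEq V] (G : SimpleGraph V)
    (c : V → Fin 3) (hc : ∀ u v, G.Adj u v → c u ≠ c v)
    (n : ℕ) (hn : 3 ≤ n) :
    ∃ D : Multiset (Finset (V × Fin 3)),
      Multiset.card D = n ∧
      (∀ v : V, ∀ col : Fin 3,
        |(support {(v, col)} D : ℚ) - (n : ℚ) / 3| ≤ 1) ∧
      (∀ v : V, ∀ col col' : Fin 3, col ≠ col' →
        support {(v, col), (v, col')} D = 0) ∧
      (∀ u v : V, G.Adj u v → ∀ col : Fin 3,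
        support {(u, col), (v, col)} D = 0) := by
  classical
  set q := n / 3 with hq
  set r := n % 3 with hr
  have hnqr : n = 3 * q + r := by rw [hq, hr]; omega
  have hr3 : r < 3 := by rw [hr]; omega
  set k : Fin 3 → ℕ := ![q + (r - (r - 1)), q + (r - 1), q] with hk
  set T : Fin 3 → Finset (V × Fin 3) :=
    fun i => Finset.univ.image (fun v => (v, c v + i)) with hT
  have hmem : ∀ (v : V) (col i : Fin 3), (v, col) ∈ T i ↔ col = c v + i := by
    intro v col i
    simp [hT, Prod.ext_iff, eq_comm]
  set D : Multiset (Finset (V × Fin 3)) :=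
    Multiset.replicate (k 0) (T 0) + Multiset.replicate (k 1) (T 1) +
      Multiset.replicate (k 2) (T 2) with hD
  have hsupp : ∀ I : Finset (V × Fin 3), support I D =
      (if I ⊆ T 0 then k 0 else 0) + (if I ⊆ T 1 then k 1 else 0) +
        (if I ⊆ T 2 then k 2 else 0) := by
    intro I
    simp only [support, hD, Multiset.filter_add, Multiset.card_add,
      card_filter_replicate]
  have hkval : ∀ j : Fin 3, n ≤ 3 * k j + 3 ∧ 3 * k j ≤ n + 3 := by
    intro j
    fin_cases j <;> simp [hk] <;> omega
  have hkb : ∀ j : Fin 3, |((k j : ℚ)) - (n : ℚ) / 3| ≤ 1 := by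
    intro j
    obtain ⟨h1, h2⟩ := hkval j
    have h1' : (n : ℚ) ≤ 3 * (k j) + 3 := by exact_mod_cast h1
    have h2' : 3 * ((k j : ℚ)) ≤ n + 3 := by exact_mod_cast h2
    rw [abs_le]
    constructor <;> [linarith ; linarith]
  refine ⟨D, ?_, ?_, ?_, ?_⟩
  · simp only [hD, Multiset.card_add, Multiset.card_replicate]
    simp only [hk, Matrix.cons_val_zero, Matrix.cons_val_one, Matrix.head_cons,
      Matrix.cons_val_two, Matrix.tail_cons]
    omega
  · intro v col
    obtain ⟨j, hj⟩ : ∃ j, col = c v + j := ⟨col - c v, (add_sub_cancel (c v) col).symm⟩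
    subst hj
    rw [hsupp]
    simp only [Finset.singleton_subset_iff, hmem, add_right_inj]
    fin_cases j <;> simpa using hkb _
  · intro v col col' hcol
    have hns : ∀ i, ¬ ({(v, col), (v, col')} : Finset (V × Fin 3)) ⊆ T i := by
      intro i h
      rw [Finset.insert_subset_iff, Finset.singleton_subset_iff, hmem, hmem] at h
      exact hcol (h.1.trans h.2.symm)
    simp [hsupp, hns]
  · intro u v huv col
    have hns : ∀ i, ¬ ({(u, col), (v, col)} : Finset (V × Fin 3)) ⊆ T i := by
      intro i h
      rw [Finset.insert_subset_iff, Finset.singleton_subset_iff, hmem, hmem] at h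
      exact hc u v huv (by have := h.1.symm.trans h.2; exact add_right_cancel this)
    simp [hsupp, hns]
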